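/- For any connected graph G and any nonempty subset S of vertices, the S-center C_S(G) is contained in a single block of G. -/

import Mathlib

/-- The `S`-eccentricity of a vertex `v`. -/
noncomputable def sEcc {V : Type*} (G : SimpleGraph V) (S : Finset V) (v : V) : ℕ :=
  S.sup fun x => G.dist v x

/-- The `S`-center of `G`. -/
noncomputable def sCenter {V : Type*} (G : SimpleGraph V) (S : Finset V) : Set V :=
  {v | ∀ w, sEcc G S v ≤ sEcc G S w}

/-- `B` induces a connected subgraph of `G` without a cut-vertex. -/
def IsCutFree {V : Type*} (G : SimpleGraph V) (B : Set V) : Prop :=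
  B.Nonempty ∧ (G.induce B).Connected ∧ ∀ v ∈ B, (G.induce (B \ {v})).Preconnected

/-- A block of `G`: a maximal set of vertices inducing a connected subgraph with no
cut-vertex. -/
def IsBlock {V : Type*} (G : SimpleGraph V) (B : Set V) : Prop :=
  IsCutFree G B ∧ ∀ B', B ⊆ B' → IsCutFree G B' → B' = B

open SimpleGraph Walk

section Aux

variable {V : Type*} {G : SimpleGraph V}

/-- Reachability within a vertex set `B`. -/
def ConIn (G : SimpleGraph V) (B : Set V) (a b : V) : Prop :=
  ∃ p : G.Walk a b, ∀ x ∈ p.support, x ∈ B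

lemma ConIn.mono {B B' : Set V} (h : B ⊆ B') {a b : V} (hc : ConIn G B a b) :
    ConIn G B' a b := ⟨hc.choose, fun x hx => h (hc.choose_spec x hx)⟩

lemma ConIn.refl {B : Set V} {a : V} (ha : a ∈ B) : ConIn G B a a :=
  ⟨Walk.nil, by simpa using ha⟩

lemma ConIn.symm {B : Set V} {a b : V} (hc : ConIn G B a b) : ConIn G B b a := by
  obtain ⟨p, hp⟩ := hc
  exact ⟨p.reverse, by simpa using hp⟩

lemma ConIn.trans {B : Set V} {a b c : V} (h1 : ConIn G B a b) (h2 : ConIn G B b c) :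
    ConIn G B a c := by
  obtain ⟨p, hp⟩ := h1; obtain ⟨q, hq⟩ := h2
  refine ⟨p.append q, fun x hx => ?_⟩
  rcases (Walk.mem_support_append_iff _ _).1 hx with h | h
  · exact hp x h
  · exact hq x h

lemma ConIn.of_adj {B : Set V} {a b : V} (h : G.Adj a b) (ha : a ∈ B) (hb : b ∈ B) :
    ConIn G B a b := ⟨h.toWalk, by simp [ha, hb]⟩

lemma reachable_induce_iff {B : Set V} {a b : V} (ha : a ∈ B) (hb : b ∈ B) :
    (G.induce B).Reachable ⟨a, ha⟩ ⟨b, hb⟩ ↔ ConIn G B a b := by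
  constructor
  · rintro ⟨p⟩
    have : ∀ {x y : B} (p : (G.induce B).Walk x y), ConIn G B x.1 y.1 := by
      intro x y p
      induction p with
      | nil => exact ConIn.refl (Subtype.mem _)
      | cons h _ ih => exact (ConIn.of_adj (G := G) h (Subtype.mem _) (Subtype.mem _)).trans ih
    exact this p
  · rintro ⟨p, hp⟩
    have : ∀ {x y : V} (p : G.Walk x y) (hx : x ∈ B) (hy : y ∈ B),
        (∀ z ∈ p.support, z ∈ B) → (G.induce B).Reachable ⟨x, hx⟩ ⟨y, hy⟩ := by
      intro x y p
      induction p with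
      | nil => intro _ _ _; rfl
      | @cons u w y h q ih =>
        intro hx hy hall
        have hw : w ∈ B := hall w (by simp)
        exact (Adj.reachable (by exact h : (G.induce B).Adj ⟨u, hx⟩ ⟨w, hw⟩)).trans
          (ih hw hy fun z hz => hall z (by simp [hz]))
    exact this p ha hb hp

lemma preconnected_induce_iff {B : Set V} :
    (G.induce B).Preconnected ↔ ∀ a ∈ B, ∀ b ∈ B, ConIn G B a b := by
  constructor
  · intro h a ha b hb
    exact (reachable_induce_iff ha hb).1 (h ⟨a, ha⟩ ⟨b, hb⟩)
  · rintro h ⟨a, ha⟩ ⟨b, hb⟩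
    exact (reachable_induce_iff ha hb).2 (h a ha b hb)

/-- A walk-based characterisation of `IsCutFree`. -/
def CF (G : SimpleGraph V) (B : Set V) : Prop :=
  B.Nonempty ∧ (∀ a ∈ B, ∀ b ∈ B, ConIn G B a b) ∧
    ∀ v ∈ B, ∀ a ∈ B \ {v}, ∀ b ∈ B \ {v}, ConIn G (B \ {v}) a b

lemma isCutFree_iff_cf {B : Set V} : IsCutFree G B ↔ CF G B := by
  unfold IsCutFree CF
  rw [connected_iff, _root_.preconnected_induce_iff]
  constructor
  · rintro ⟨h1, ⟨h2, _⟩, h3⟩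
    exact ⟨h1, h2, fun v hv => (_root_.preconnected_induce_iff).1 (h3 v hv)⟩
  · rintro ⟨h1, h2, h3⟩
    exact ⟨h1, ⟨h2, Set.nonempty_coe_sort.2 h1⟩, fun v hv => (_root_.preconnected_induce_iff).2 (h3 v hv)⟩

lemma cf_singleton (v : V) : CF G {v} := by
  refine ⟨⟨v, rfl⟩, ?_, ?_⟩
  · intro a ha b hb
    rw [Set.mem_singleton_iff] at ha hb
    subst ha; subst hb
    exact ConIn.refl rfl
  · intro x hx a ha b hb
    rw [Set.mem_singleton_iff] at hx
    subst hx
    simp at ha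

lemma cf_pair {v w : V} (h : G.Adj v w) : CF G {v, w} := by
  refine ⟨⟨v, Or.inl rfl⟩, ?_, ?_⟩
  · intro a ha b hb
    rcases ha with rfl | ha <;> rcases hb with rfl | hb
    · exact ConIn.refl (Or.inl rfl)
    · rw [Set.mem_singleton_iff] at hb; subst hb
      exact ConIn.of_adj h (Or.inl rfl) (Or.inr rfl)
    · rw [Set.mem_singleton_iff] at ha; subst ha
      exact ConIn.of_adj h.symm (Or.inr rfl) (Or.inl rfl)
    · rw [Set.mem_singleton_iff] at ha hb; subst ha; subst hb
      exact ConIn.refl (Or.inr rfl)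
  · intro x hx a ha b hb
    have hab : a = b := by
      rcases hx with rfl | hx
      · rcases ha.1 with rfl | ha1
        · exact absurd rfl ha.2
        · rcases hb.1 with rfl | hb1
          · exact absurd rfl hb.2
          · rw [Set.mem_singleton_iff] at ha1 hb1; rw [ha1, hb1]
      · rw [Set.mem_singleton_iff] at hx; subst hx
        rcases ha.1 with rfl | ha1
        · rcases hb.1 with rfl | hb1
          · rfl
          · exact absurd hb1 hb.2
        · exact absurd ha1 ha.2
    subst hab
    exact ConIn.refl ha

lemma exists_block_superset [Finite V] {B₀ : Set V} (h : IsCutFree G B₀) :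
    ∃ B : Set V, B₀ ⊆ B ∧ IsBlock G B := by
  obtain ⟨B, hB, hmax⟩ := Set.Finite.exists_maximalFor (id : Set V → Set V)
    {X | B₀ ⊆ X ∧ IsCutFree G X} (Set.toFinite _) ⟨B₀, subset_rfl, h⟩
  refine ⟨B, hB.1, hB.2, fun B' hsub hcf => Set.Subset.antisymm (hmax (j := B') ⟨hB.1.trans hsub, hcf⟩ hsub) hsub⟩

end Aux

section Aux2

variable {V : Type*} {G : SimpleGraph V} [DecidableEq V]

lemma end_not_mem_takeUntil {u v x : V} {q : G.Walk u v} (hq : q.IsPath)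
    (hx : x ∈ q.support) (hxv : x ≠ v) : v ∉ (q.takeUntil x hx).support := by
  intro hvt
  have hnd : q.support.Nodup := hq.support_nodup
  rw [← q.take_spec hx, support_append] at hnd
  have hmem : v ∈ (q.dropUntil x hx).support := end_mem_support _
  rw [support_eq_cons, List.mem_cons] at hmem
  rcases hmem with h | h
  · exact hxv h.symm
  · exact (List.disjoint_of_nodup_append hnd) hvt h

lemma start_not_mem_dropUntil {u v x : V} {q : G.Walk u v} (hq : q.IsPath)
    (hx : x ∈ q.support) (hxu : x ≠ u) : u ∉ (q.dropUntil x hx).support := by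
  intro hvd
  have hnd : q.support.Nodup := hq.support_nodup
  rw [← q.take_spec hx, support_append] at hnd
  rw [support_eq_cons, List.mem_cons] at hvd
  rcases hvd with h | h
  · exact hxu h.symm
  · exact (List.disjoint_of_nodup_append hnd) (start_mem_support _) h

/-- First hit of `B` along a walk. -/
lemma exists_first_hit {B : Set V} :
    ∀ {a b : V} (p : G.Walk a b), a ∉ B → b ∈ B →
      ∃ c ∈ B, ∃ q : G.Walk a c, (∀ x ∈ q.support, x ∈ B → x = c) ∧
        ∀ x ∈ q.support, x ∈ p.support := by
  intro a b p
  induction p with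
  | nil => intro ha hb; exact absurd hb ha
  | @cons a a' b h p ih =>
    intro ha hb
    by_cases ha' : a' ∈ B
    · refine ⟨a', ha', h.toWalk, ?_, ?_⟩
      · intro x hx hxB
        have : x = a ∨ x = a' := by simpa using hx
        rcases this with rfl | rfl
        · exact absurd hxB ha
        · rfl
      · intro x hx
        have : x = a ∨ x = a' := by simpa using hx
        rcases this with rfl | rfl
        · simp
        · simp [start_mem_support]
    · obtain ⟨c, hc, q, hq1, hq2⟩ := ih ha' hb
      refine ⟨c, hc, Walk.cons h q, ?_, ?_⟩
      · intro x hx hxB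
        have : x = a ∨ x ∈ q.support := by simpa using hx
        rcases this with rfl | h1
        · exact absurd hxB ha
        · exact hq1 x h1 hxB
      · intro x hx
        have : x = a ∨ x ∈ q.support := by simpa using hx
        rcases this with rfl | h1
        · simp
        · simp [hq2 x h1]

lemma cf_ear {B : Set V} (hB : CF G B) {a b : V} (ha : a ∈ B) (hb : b ∈ B)
    (hab : a ≠ b) {u w : V} (p : G.Walk u w) (hp : p.IsPath)
    (hdisj : ∀ x ∈ p.support, x ∉ B) (hau : G.Adj a u) (hwb : G.Adj w b) :
    CF G (B ∪ {x | x ∈ p.support}) := by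
  obtain ⟨hne, hcon, hcut⟩ := hB
  set P : Set V := {x | x ∈ p.support} with hP
  have hBP : B ⊆ B ∪ P := Set.subset_union_left
  -- connectivity: anchor everything at a
  have anchor : ∀ x ∈ B ∪ P, ConIn G (B ∪ P) a x := by
    intro x hx
    rcases hx with hx | hx
    · exact (hcon a ha x hx).mono hBP
    · refine ⟨Walk.cons hau (p.takeUntil x hx), ?_⟩
      intro y hy
      have : y = a ∨ y ∈ (p.takeUntil x hx).support := by simpa using hy
      rcases this with rfl | h1
      · exact Or.inl ha
      · exact Or.inr (p.support_takeUntil_subset hx h1)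
  refine ⟨⟨a, Or.inl ha⟩, fun x hx y hy => ((anchor x hx).symm).trans (anchor y hy), ?_⟩
  -- removal
  intro v hv
  rcases hv with hvB | hvP
  · -- v ∈ B
    have hvP : v ∉ P := fun h => hdisj v h hvB
    have hsub : B \ {v} ⊆ (B ∪ P) \ {v} := fun x hx => ⟨Or.inl hx.1, hx.2⟩
    by_cases hva : v = a
    · subst hva
      have hbv : b ∈ B \ {v} := ⟨hb, fun h => hab (by simpa using h.symm)⟩
      have anchor2 : ∀ x ∈ (B ∪ P) \ {v}, ConIn G ((B ∪ P) \ {v}) x b := by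
        rintro x ⟨hx, hxv⟩
        rcases hx with hx | hx
        · exact (hcut v ‹v ∈ B› x ⟨hx, hxv⟩ b hbv).mono hsub
        · have hxs : x ∈ p.support := hx
          refine ⟨(p.dropUntil x hxs).append hwb.toWalk, ?_⟩
          intro y hy
          rw [mem_support_append_iff] at hy
          rcases hy with hy | hy
          · have hyP : y ∈ P := p.support_dropUntil_subset hxs hy
            exact ⟨Or.inr hyP, fun h => hdisj y hyP (by rw [Set.mem_singleton_iff.1 h]; exact hvB)⟩
          · have : y = w ∨ y = b := by simpa using hy
            rcases this with rfl | rfl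
            · have hyP : y ∈ P := end_mem_support p
              exact ⟨Or.inr hyP, fun h => hdisj y hyP (by rwa [Set.mem_singleton_iff.1 h])⟩
            · exact ⟨Or.inl hb, hbv.2⟩
      exact fun x hx y hy => (anchor2 x hx).trans ((anchor2 y hy).symm)
    · have hav : a ∈ B \ {v} := ⟨ha, fun h => hva (Set.mem_singleton_iff.1 h).symm⟩
      have anchor2 : ∀ x ∈ (B ∪ P) \ {v}, ConIn G ((B ∪ P) \ {v}) x a := by
        rintro x ⟨hx, hxv⟩
        rcases hx with hx | hx
        · exact (hcut v hvB x ⟨hx, hxv⟩ a hav).mono hsub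
        · have hxs : x ∈ p.support := hx
          refine ConIn.symm ⟨Walk.cons hau (p.takeUntil x hxs), ?_⟩
          intro y hy
          have : y = a ∨ y ∈ (p.takeUntil x hxs).support := by simpa using hy
          rcases this with rfl | h1
          · exact ⟨Or.inl ha, fun h => hva (Set.mem_singleton_iff.1 h).symm⟩
          · have hyP : y ∈ P := p.support_takeUntil_subset hxs h1
            exact ⟨Or.inr hyP, fun h => hvP ((Set.mem_singleton_iff.1 h) ▸ hyP)⟩
      exact fun x hx y hy => (anchor2 x hx).trans ((anchor2 y hy).symm)
  · -- v ∈ P, so v ∉ B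
    have hvB : v ∉ B := hdisj v hvP
    have hsub : B ⊆ (B ∪ P) \ {v} := fun x hx => ⟨Or.inl hx, fun h => hvB ((Set.mem_singleton_iff.1 h) ▸ hx)⟩
    have hvs : v ∈ p.support := hvP
    have htake := hp.takeUntil hvs
    have hdropp := hp.dropUntil hvs
    have anchor2 : ∀ x ∈ (B ∪ P) \ {v}, ConIn G ((B ∪ P) \ {v}) x a := by
      rintro x ⟨hx, hxv⟩
      have hxv' : x ≠ v := fun h => hxv (by simpa using h)
      rcases hx with hx | hx
      · exact (hcon x hx a ha).mono (fun y hy => hsub hy)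
      · -- x on the path; v also on the path
        have hxs : x ∈ p.support := hx
        have hx' : x ∈ (p.takeUntil v hvs).support ∨ x ∈ (p.dropUntil v hvs).support := by
          rw [← mem_support_append_iff, p.take_spec hvs]; exact hxs
        rcases hx' with hx1 | hx2
        · -- x on the prefix before v
          have hvnot : v ∉ ((p.takeUntil v hvs).takeUntil x hx1).support :=
            end_not_mem_takeUntil htake hx1 hxv'
          refine ConIn.symm ⟨Walk.cons hau ((p.takeUntil v hvs).takeUntil x hx1), ?_⟩
          intro y hy
          have : y = a ∨ y ∈ ((p.takeUntil v hvs).takeUntil x hx1).support := by simpa using hy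
          rcases this with rfl | h1
          · exact hsub ha
          · have hyP : y ∈ P :=
              p.support_takeUntil_subset hvs ((p.takeUntil v hvs).support_takeUntil_subset hx1 h1)
            exact ⟨Or.inr hyP, fun h => by rw [Set.mem_singleton_iff] at h; subst h; exact hvnot h1⟩
        · -- x on the suffix after v
          have hvnot : v ∉ ((p.dropUntil v hvs).dropUntil x hx2).support :=
            start_not_mem_dropUntil hdropp hx2 hxv'
          have step : ConIn G ((B ∪ P) \ {v}) x b := by
            refine ⟨((p.dropUntil v hvs).dropUntil x hx2).append hwb.toWalk, ?_⟩
            intro y hy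
            rw [mem_support_append_iff] at hy
            rcases hy with hy | hy
            · have hyP : y ∈ P :=
                p.support_dropUntil_subset hvs ((p.dropUntil v hvs).support_dropUntil_subset hx2 hy)
              exact ⟨Or.inr hyP, fun h => by rw [Set.mem_singleton_iff] at h; subst h; exact hvnot hy⟩
            · have : y = w ∨ y = b := by simpa using hy
              rcases this with rfl | rfl
              · have hyP : y ∈ P := end_mem_support p
                exact ⟨Or.inr hyP, fun h => by rw [Set.mem_singleton_iff] at h; subst h; exact hvnot (end_mem_support _)⟩
              · exact hsub hb
          exact step.trans ((hcon b hb a ha).mono (fun y hy => hsub hy))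
    exact fun x hx y hy => (anchor2 x hx).trans ((anchor2 y hy).symm)

/-- If `B` is a block and `w ∉ B`, some vertex of `B` separates `w` from `B`. -/
lemma exists_separator [Finite V] {B : Set V} (hB : IsBlock G B) (hG : G.Connected)
    {w : V} (hw : w ∉ B) :
    ∃ v ∈ B, ∀ b ∈ B, ∀ p : G.Walk w b, v ∈ p.support := by
  obtain ⟨hcf, hmax⟩ := hB
  have hcf' := isCutFree_iff_cf.1 hcf
  obtain ⟨c₀, hc₀⟩ := hcf'.1
  obtain ⟨p0⟩ := hG w c₀
  obtain ⟨v, hvB, P0, hP01, _⟩ := exists_first_hit p0 hw hc₀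
  set P := P0.bypass with hPdef
  have hPpath : P.IsPath := P0.bypass_isPath
  have hP1 : ∀ x ∈ P.support, x ∈ B → x = v := fun x hx => hP01 x (P0.support_bypass_subset hx)
  refine ⟨v, hvB, ?_⟩
  intro b hb p
  by_contra hvp
  obtain ⟨b', hb'B, Q0, hQ01, hQ02⟩ := exists_first_hit p hw hb
  have hvQ0 : v ∉ Q0.support := fun h => hvp (hQ02 v h)
  set Q := Q0.bypass with hQdef
  have hQpath : Q.IsPath := Q0.bypass_isPath
  have hQ1 : ∀ x ∈ Q.support, x ∈ B → x = b' := fun x hx => hQ01 x (Q0.support_bypass_subset hx)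
  have hvQ : v ∉ Q.support := fun h => hvQ0 (Q0.support_bypass_subset h)
  have hb'v : b' ≠ v := fun h => hvQ0 (h ▸ Q0.end_mem_support)
  have hwv : w ≠ v := fun h => hw (h ▸ hvB)
  obtain ⟨ka, hadj1, t, ht⟩ := Walk.exists_eq_cons_of_ne (fun h => hwv h.symm) P.reverse
  have htpath : (Walk.cons hadj1 t).IsPath := ht ▸ hPpath.reverse
  have hvt : v ∉ t.support := ((Walk.cons_isPath_iff _ _).1 htpath).2
  have htsub : ∀ x ∈ t.support, x ∈ P.support := by
    intro x hx
    have : x ∈ P.reverse.support := by rw [ht]; simp [hx]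
    simpa using this
  have htB : ∀ x ∈ t.support, x ∉ B := fun x hx hxB => hvt (hP1 x (htsub x hx) hxB ▸ hx)
  obtain ⟨kb, hadj2, t2, ht2⟩ := Walk.exists_eq_cons_of_ne
    (fun h => hw (h ▸ hb'B) : b' ≠ w) Q.reverse
  have ht2path : (Walk.cons hadj2 t2).IsPath := ht2 ▸ hQpath.reverse
  have hb't2 : b' ∉ t2.support := ((Walk.cons_isPath_iff _ _).1 ht2path).2
  have ht2sub : ∀ x ∈ t2.support, x ∈ Q.support := by
    intro x hx
    have : x ∈ Q.reverse.support := by rw [ht2]; simp [hx]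
    simpa using this
  have ht2B : ∀ x ∈ t2.support, x ∉ B := fun x hx hxB => hb't2 (hQ1 x (ht2sub x hx) hxB ▸ hx)
  set ρ := (t.append t2.reverse).bypass with hρdef
  have hρpath : ρ.IsPath := (t.append t2.reverse).bypass_isPath
  have hρB : ∀ x ∈ ρ.support, x ∉ B := by
    intro x hx
    have hx' : x ∈ (t.append t2.reverse).support := (t.append t2.reverse).support_bypass_subset hx
    rw [Walk.mem_support_append_iff] at hx'
    rcases hx' with h | h
    · exact htB x h
    · exact ht2B x (by simpa using h)
  have hear := cf_ear hcf' hvB hb'B (fun h => hb'v h.symm) ρ hρpath hρB hadj1 hadj2.symm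
  have heq := hmax (B ∪ {x | x ∈ ρ.support}) Set.subset_union_left (isCutFree_iff_cf.2 hear)
  have hka2 : ka ∈ B := by
    rw [← heq]; exact Or.inr ρ.start_mem_support
  exact htB ka t.start_mem_support hka2

end Aux2

section Dist

variable {V : Type*} {G : SimpleGraph V}

lemma dist_add_dist_le_of_sep (hG : G.Connected) {w v u : V}
    (h : ∀ p : G.Walk w u, v ∈ p.support) :
    G.dist w v + G.dist v u ≤ G.dist w u := by
  classical
  obtain ⟨p, hp⟩ := hG.exists_walk_length_eq_dist w u
  have hv := h p
  calc G.dist w v + G.dist v u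
      ≤ (p.takeUntil v hv).length + (p.dropUntil v hv).length :=
        Nat.add_le_add (dist_le _) (dist_le _)
    _ = p.length := by rw [← length_append, take_spec]
    _ = G.dist w u := hp

lemma sEcc_exists {S : Finset V} (hS : S.Nonempty) (v : V) :
    ∃ u ∈ S, G.dist v u = sEcc G S v := by
  obtain ⟨u, hu, h⟩ := Finset.exists_mem_eq_sup S hS fun x => G.dist v x
  exact ⟨u, hu, h.symm⟩

lemma dist_le_sEcc {S : Finset V} {u : V} (hu : u ∈ S) (v : V) :
    G.dist v u ≤ sEcc G S v := Finset.le_sup hu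

/-- The key eccentricity argument: a vertex cannot separate two `S`-central vertices. -/
lemma core_no_sep (hG : G.Connected) {S : Finset V} (hS : S.Nonempty) {v w₁ w₂ : V}
    (h1 : w₁ ∈ sCenter G S) (h2 : w₂ ∈ sCenter G S) (hn1 : w₁ ≠ v) (hn2 : w₂ ≠ v)
    (hsep : ∀ p : G.Walk w₁ w₂, v ∈ p.support) : False := by
  obtain ⟨u, huS, hu⟩ := sEcc_exists (G := G) hS v
  have key : ∀ z, z ∈ sCenter G S → z ≠ v → (∀ p : G.Walk z u, v ∈ p.support) → False := by
    intro z hz hzv hall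
    have hd := dist_add_dist_le_of_sep hG hall
    have hA := dist_le_sEcc (G := G) huS z
    have hC := hG.pos_dist_of_ne hzv
    have hD := hz v
    omega
  by_cases hall : ∀ p : G.Walk w₁ u, v ∈ p.support
  · exact key w₁ h1 hn1 hall
  · push_neg at hall
    obtain ⟨p1, hp1⟩ := hall
    refine key w₂ h2 hn2 ?_
    intro p
    by_contra hvp
    have := hsep (p1.append p.reverse)
    rw [Walk.mem_support_append_iff] at this
    rcases this with h | h
    · exact hp1 h
    · exact hvp (by simpa using h)

end Dist

section Main

variable {V : Type*} [Fintype V] {G : SimpleGraph V}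

/-- Two vertices that cannot be separated by any third vertex lie in a common cut-free set. -/
lemma exists_cf_pair_of_no_sep (hG : G.Connected) :
    ∀ (n : ℕ) (v w : V), v ≠ w → G.dist v w ≤ n →
      (∀ x, x ≠ v → x ≠ w → ∃ p : G.Walk v w, x ∉ p.support) →
      ∃ D : Set V, IsCutFree G D ∧ v ∈ D ∧ w ∈ D := by
  classical
  intro n
  induction n with
  | zero =>
    intro v w hvw hd _
    have := hG.pos_dist_of_ne hvw
    omega
  | succ n ih =>
    intro v w hvw hd h
    obtain ⟨p0, hp0⟩ := hG.exists_walk_length_eq_dist v w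
    set q := p0.bypass with hqdef
    have hqpath : q.IsPath := p0.bypass_isPath
    have hqlen : q.length = G.dist v w := by
      have h1 : q.length ≤ p0.length := p0.length_bypass_le
      have h2 := SimpleGraph.dist_le q
      omega
    have hdpos : 0 < G.dist v w := hG.pos_dist_of_ne hvw
    by_cases hlen : q.length = 1
    · have hadj : G.Adj v w := q.adj_of_length_eq_one hlen
      exact ⟨{v, w}, isCutFree_iff_cf.2 (cf_pair hadj), Or.inl rfl, Or.inr rfl⟩
    · -- length ≥ 2
      obtain ⟨pn, hadj, t, ht⟩ := Walk.exists_eq_cons_of_ne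
        (fun hh => hvw hh.symm : w ≠ v) q.reverse
    -- hadj : G.Adj w pn, t : Walk pn v
      have htpath : (Walk.cons hadj t).IsPath := ht ▸ hqpath.reverse
      have hwt : w ∉ t.support := ((Walk.cons_isPath_iff _ _).1 htpath).2
      have htlen : t.length + 1 = G.dist v w := by
        have : q.reverse.length = q.length := q.length_reverse
        rw [ht] at this
        simpa [this.symm] using hqlen
      have hpn_v : pn ≠ v := by
        intro hh
        rw [hh] at hadj
        have : G.dist v w ≤ 1 := SimpleGraph.dist_le hadj.symm.toWalk
        omega
      have hpn_w : pn ≠ w := fun hh => hwt (hh ▸ t.start_mem_support)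
      have hinherit : ∀ x, x ≠ v → x ≠ pn → ∃ p : G.Walk v pn, x ∉ p.support := by
        intro x hxv hxpn
        by_cases hxw : x = w
        · subst hxw
          exact ⟨t.reverse, by simpa using hwt⟩
        · obtain ⟨p', hp'⟩ := h x hxv hxw
          refine ⟨p'.append hadj.toWalk, ?_⟩
          rw [Walk.mem_support_append_iff]
          rintro (hh | hh)
          · exact hp' hh
          · have : x = w ∨ x = pn := by simpa using hh
            rcases this with rfl | rfl
            · exact hxw rfl
            · exact hxpn rfl
      have hdistpn : G.dist v pn ≤ n := by
        have : G.dist v pn ≤ t.reverse.length := SimpleGraph.dist_le t.reverse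
        rw [t.length_reverse] at this
        omega
      obtain ⟨D, hD, hvD, hpnD⟩ := ih v pn (fun hh => hpn_v hh.symm) hdistpn hinherit
      obtain ⟨B, hDB, hBblock⟩ := exists_block_superset hD
      by_cases hwB : w ∈ B
      · exact ⟨B, hBblock.1, hDB hvD, hwB⟩
      · obtain ⟨s, hsB, hsep⟩ := exists_separator hBblock hG hwB
        have hs : s = pn := by
          have hmem := hsep pn (hDB hpnD) hadj.toWalk
          have : s = w ∨ s = pn := by simpa using hmem
          rcases this with rfl | rfl
          · exact absurd hsB hwB
          · rfl
        subst hs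
        obtain ⟨p', hp'⟩ := h s (fun hh => hpn_v hh) hpn_w
        have := hsep v (hDB hvD) p'.reverse
        rw [Walk.support_reverse, List.mem_reverse] at this
        exact absurd this hp'

theorem sCenter_subset_block' (hG : G.Connected) (S : Finset V) (hS : S.Nonempty) :
    ∃ B : Set V, IsBlock G B ∧ sCenter G S ⊆ B := by
  classical
  obtain ⟨s0, hs0⟩ := hS
  obtain ⟨c₀, -, hc₀⟩ := Finset.exists_min_image Finset.univ (sEcc G S) ⟨s0, Finset.mem_univ _⟩
  have hc₀C : c₀ ∈ sCenter G S := fun w => hc₀ w (Finset.mem_univ _)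
  set C := sCenter G S with hC
  obtain ⟨B0, hB0sub, hB0⟩ := exists_block_superset (isCutFree_iff_cf.2 (cf_singleton c₀))
  obtain ⟨B, hBmem, hBmax⟩ := Set.Finite.exists_maximalFor
      (fun X : Set V => (X ∩ C).ncard) {X | IsBlock G X} (Set.toFinite _) ⟨B0, hB0⟩
  by_cases hsub : C ⊆ B
  · exact ⟨B, hBmem, hsub⟩
  exfalso
  obtain ⟨w, hwC, hwB⟩ := Set.not_subset.1 hsub
  obtain ⟨v, hvB, hvsep⟩ := exists_separator hBmem hG hwB
  have hwv : w ≠ v := fun h => hwB (h ▸ hvB)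
  have hBC : B ∩ C ⊆ {v} := by
    rintro c ⟨hcB, hcC⟩
    rw [Set.mem_singleton_iff]
    by_contra hcv
    exact core_no_sep hG ⟨s0, hs0⟩ hwC hcC hwv hcv (fun p => hvsep c hcB p)
  have hge : 1 ≤ (B ∩ C).ncard := by
    have hc₀B0 : c₀ ∈ B0 ∩ C := ⟨hB0sub rfl, hc₀C⟩
    have h0 : 1 ≤ (B0 ∩ C).ncard := (Set.ncard_pos (Set.toFinite _)).2 ⟨c₀, hc₀B0⟩
    by_contra hlt
    push_neg at hlt
    have : (B0 ∩ C).ncard ≤ (B ∩ C).ncard :=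
      hBmax (j := B0) hB0 (show (B ∩ C).ncard ≤ (B0 ∩ C).ncard by omega)
    omega
  have hle : (B ∩ C).ncard ≤ 1 := by
    have := Set.ncard_le_ncard hBC (Set.toFinite _)
    simpa using this
  obtain ⟨c, hc⟩ : (B ∩ C).Nonempty := Set.nonempty_of_ncard_ne_zero (by omega)
  have hcv := hBC hc
  rw [Set.mem_singleton_iff] at hcv
  subst hcv
  have hvC : c ∈ C := hc.2
  -- rename: the separator vertex is `c` now
  have hvw : c ≠ w := fun h => hwv h.symm
  have hnosep : ∀ x, x ≠ c → x ≠ w → ∃ p : G.Walk c w, x ∉ p.support := by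
    intro x hxv hxw
    by_contra hn
    push_neg at hn
    exact core_no_sep hG ⟨s0, hs0⟩ hvC hwC hxv.symm hxw.symm hn
  obtain ⟨D, hD, hvD, hwD⟩ := exists_cf_pair_of_no_sep hG (G.dist c w) c w hvw le_rfl hnosep
  obtain ⟨B₂, hDB₂, hB₂⟩ := exists_block_superset hD
  have hpair : ({c, w} : Set V) ⊆ B₂ ∩ C := by
    rintro x (rfl | rfl)
    · exact ⟨hDB₂ hvD, hvC⟩
    · exact ⟨hDB₂ hwD, hwC⟩
  have h2 : 2 ≤ (B₂ ∩ C).ncard := by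
    calc 2 = ({c, w} : Set V).ncard := (Set.ncard_pair hvw).symm
      _ ≤ (B₂ ∩ C).ncard := Set.ncard_le_ncard hpair (Set.toFinite _)
  have : (B₂ ∩ C).ncard ≤ (B ∩ C).ncard :=
    hBmax (j := B₂) hB₂ (show (B ∩ C).ncard ≤ (B₂ ∩ C).ncard by omega)
  omega

end Main

/-- For any connected graph `G` and any nonempty set `S` of vertices, the `S`-center of `G`
is contained in a single block of `G`. -/
theorem sCenter_subset_block {V : Type*} [Fintype V] (G : SimpleGraph V)
    (hG : G.Connected) (S : Finset V) (hS : S.Nonempty) :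
    ∃ B : Set V, IsBlock G B ∧ sCenter G S ⊆ B :=
  sCenter_subset_block' hG S hS
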